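/- Let f : X → X be continuous on a compact metric space, μ an f-invariant Borel probability measure, and φ : X → ℝ continuous. Then the measure-theoretic pressure P_μ(f,φ) = h_μ(f) + ∫φ dμ is at most the topological pressure P(f,φ). -/

import Mathlib

open MeasureTheory Filter

section Defs

variable {X : Type*}

/-- The entropy `∑_{A ∈ P} -μ(A) log μ(A)` of a finite partition `P`. -/
noncomputable def partitionEntropy [MeasurableSpace X] (μ : Measure X)
    (P : Finset (Set X)) : ℝ :=
  ∑ A ∈ P, Real.negMulLog (μ A).toReal

/-- The dynamical refinement `P ∨ f⁻¹P ∨ ⋯ ∨ f⁻⁽ⁿ⁻¹⁾P` of a finite partition. -/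
noncomputable def dynRefine (f : X → X) (P : Finset (Set X)) (n : ℕ) :
    Finset (Set X) := by
  classical
  exact Finset.image
    (fun c : Fin n → {A // A ∈ P} => ⋂ k : Fin n, f^[(k : ℕ)] ⁻¹' (c k : Set X))
    Finset.univ

/-- A finite measurable partition of `X`. -/
def IsMeasPartition [MeasurableSpace X] (P : Finset (Set X)) : Prop :=
  (∀ A ∈ P, MeasurableSet A) ∧ ((P : Set (Set X)).PairwiseDisjoint id) ∧
    ⋃₀ (P : Set (Set X)) = Set.univ

/-- The entropy of `f` relative to a finite partition `P`:
`lim (1/n) H_μ(P ∨ f⁻¹P ∨ ⋯ ∨ f⁻⁽ⁿ⁻¹⁾P)`. -/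
noncomputable def dynEntropy [MeasurableSpace X] (f : X → X) (μ : Measure X)
    (P : Finset (Set X)) : ℝ :=
  Filter.atTop.liminf fun n : ℕ => partitionEntropy μ (dynRefine f P n) / n

/-- The Kolmogorov–Sinai entropy of `f` with respect to `μ`: the supremum of the
partition entropies over all finite measurable partitions. -/
noncomputable def ksEntropy [MeasurableSpace X] (f : X → X) (μ : Measure X) : EReal :=
  ⨆ (P : Finset (Set X)) (_ : IsMeasPartition P), ((dynEntropy f μ P : ℝ) : EReal)

/-- `E` is `(n, ε)`-spanning for `f`. -/
def IsSpanning [PseudoMetricSpace X] (f : X → X) (n : ℕ) (ε : ℝ) (E : Finset X) : Prop :=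
  ∀ x : X, ∃ y ∈ E, ∀ k < n, dist (f^[k] x) (f^[k] y) < ε

/-- The minimal weighted sum `inf { ∑_{y ∈ E} exp(∑_{k<n} φ(fᵏ y)) }` over
`(n, ε)`-spanning sets `E`. -/
noncomputable def spanningSum [PseudoMetricSpace X] (f : X → X) (φ : X → ℝ)
    (n : ℕ) (ε : ℝ) : ℝ :=
  sInf {s : ℝ | ∃ E : Finset X, IsSpanning f n ε E ∧
    s = ∑ y ∈ E, Real.exp (∑ k ∈ Finset.range n, φ (f^[k] y))}

/-- The topological pressure of `(f, φ)`, defined via `(n, ε)`-spanning sets: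
`P(f,φ) = lim_{ε→0} limsup_{n→∞} (1/n) log inf {…}` (the limit as `ε → 0` is the
supremum over `ε > 0` by monotonicity). -/
noncomputable def topPressure [PseudoMetricSpace X] (f : X → X) (φ : X → ℝ) : EReal :=
  ⨆ (ε : ℝ) (_ : 0 < ε),
    Filter.atTop.limsup fun n : ℕ => ((Real.log (spanningSum f φ n ε) / n : ℝ) : EReal)

end Defs

namespace VPaux
open Real MeasureTheory Filter Metric


lemma negMulLog_add_le {x y : ℝ} (hx : 0 ≤ x) (hy : 0 ≤ y) :
    Real.negMulLog (x + y) ≤ Real.negMulLog x + Real.negMulLog y := by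
  simp only [Real.negMulLog, neg_mul]
  have h1 : x * Real.log x ≤ x * Real.log (x + y) := by
    rcases eq_or_lt_of_le hx with h | h
    · simp [← h]
    · exact mul_le_mul_of_nonneg_left (Real.log_le_log h (by linarith)) hx
  have h2 : y * Real.log y ≤ y * Real.log (x + y) := by
    rcases eq_or_lt_of_le hy with h | h
    · simp [← h]
    · exact mul_le_mul_of_nonneg_left (Real.log_le_log h (by linarith)) hy
  nlinarith [h1, h2]

lemma negMulLog_sum_le {α : Type*} (s : Finset α) (p : α → ℝ) (hp : ∀ i ∈ s, 0 ≤ p i) :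
    Real.negMulLog (∑ i ∈ s, p i) ≤ ∑ i ∈ s, Real.negMulLog (p i) := by
  classical
  induction s using Finset.cons_induction with
  | empty => simp
  | cons a s ha ih =>
      rw [Finset.sum_cons, Finset.sum_cons]
      calc Real.negMulLog (p a + ∑ i ∈ s, p i)
          ≤ Real.negMulLog (p a) + Real.negMulLog (∑ i ∈ s, p i) :=
            negMulLog_add_le (hp a (Finset.mem_cons_self a s))
              (Finset.sum_nonneg fun i hi => hp i (Finset.mem_cons_of_mem hi))
        _ ≤ _ := by
            gcongr
            exact ih fun i hi => hp i (Finset.mem_cons_of_mem hi)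

lemma sum_negMulLog_le_card {α : Type*} (s : Finset α) (p : α → ℝ) (hp : ∀ i ∈ s, 0 ≤ p i) :
    ∑ i ∈ s, Real.negMulLog (p i)
      ≤ Real.negMulLog (∑ i ∈ s, p i) + (∑ i ∈ s, p i) * Real.log s.card := by
  classical
  rcases s.eq_empty_or_nonempty with rfl | hs
  · simp
  by_cases hS : ∑ i ∈ s, p i = 0
  · have hz : ∀ i ∈ s, p i = 0 := (Finset.sum_eq_zero_iff_of_nonneg hp).1 hS
    rw [hS, Finset.sum_congr rfl fun i hi => by rw [hz i hi]]
    simp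
  have hSpos : 0 < ∑ i ∈ s, p i := lt_of_le_of_ne (Finset.sum_nonneg hp) (Ne.symm hS)
  have hc : (0 : ℝ) < s.card := by exact_mod_cast Finset.card_pos.2 hs
  have jensen := Real.concaveOn_negMulLog.le_map_sum (t := s) (w := fun _ => (s.card : ℝ)⁻¹)
    (p := p) (fun i _ => by positivity) (by
      rw [Finset.sum_const, nsmul_eq_mul]
      field_simp) (fun i hi => Set.mem_Ici.2 (hp i hi))
  simp only [smul_eq_mul, ← Finset.mul_sum] at jensen
  have key : Real.negMulLog ((s.card : ℝ)⁻¹ * ∑ i ∈ s, p i)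
      = (s.card : ℝ)⁻¹ * (Real.negMulLog (∑ i ∈ s, p i) + (∑ i ∈ s, p i) * Real.log s.card) := by
    rw [Real.negMulLog, Real.negMulLog, Real.log_mul (by positivity) hS, Real.log_inv]
    ring
  rw [key] at jensen
  calc ∑ i ∈ s, Real.negMulLog (p i)
      = (s.card : ℝ) * ((s.card : ℝ)⁻¹ * ∑ i ∈ s, Real.negMulLog (p i)) := by field_simp
    _ ≤ (s.card : ℝ) * ((s.card : ℝ)⁻¹ *
          (Real.negMulLog (∑ i ∈ s, p i) + (∑ i ∈ s, p i) * Real.log s.card)) := by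
        gcongr
    _ = _ := by field_simp

lemma gibbs {α : Type*} (s : Finset α) (p a : α → ℝ) (hp : ∀ i ∈ s, 0 ≤ p i)
    (hp1 : ∑ i ∈ s, p i = 1) :
    ∑ i ∈ s, (p i * a i + Real.negMulLog (p i)) ≤ Real.log (∑ i ∈ s, Real.exp (a i)) := by
  classical
  set s' := s.filter (fun i => 0 < p i) with hs'
  have hzero : ∀ i ∈ s, i ∉ s' → p i = 0 := by
    intro i hi hins'
    by_contra h
    exact hins' (Finset.mem_filter.2 ⟨hi, lt_of_le_of_ne (hp i hi) (Ne.symm h)⟩)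
  have hsum' : ∑ i ∈ s', p i = 1 := by
    rw [← hp1]
    exact (Finset.sum_subset (Finset.filter_subset _ _)
      (fun i hi hi' => hzero i hi hi')).symm ▸ rfl
  have hne' : s'.Nonempty := by
    by_contra h
    rw [Finset.not_nonempty_iff_eq_empty] at h
    rw [h, Finset.sum_empty] at hsum'
    norm_num at hsum'
  have hLHS : ∑ i ∈ s, (p i * a i + Real.negMulLog (p i))
      = ∑ i ∈ s', (p i * a i + Real.negMulLog (p i)) := by
    refine (Finset.sum_subset (Finset.filter_subset _ _) ?_).symm
    intro i hi hi'
    rw [hzero i hi hi']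
    simp
  have hconc : ConcaveOn ℝ (Set.Ioi 0) Real.log := strictConcaveOn_log_Ioi.concaveOn
  have jensen := hconc.le_map_sum (t := s') (w := p)
    (p := fun i => Real.exp (a i) / p i)
    (fun i hi => le_of_lt (Finset.mem_filter.1 hi).2) hsum'
    (fun i hi => Set.mem_Ioi.2 (div_pos (Real.exp_pos _) (Finset.mem_filter.1 hi).2))
  simp only [smul_eq_mul] at jensen
  have hxi : ∀ i ∈ s', p i * (Real.exp (a i) / p i) = Real.exp (a i) := by
    intro i hi
    have hpi := (Finset.mem_filter.1 hi).2
    field_simp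
  have hterm : ∀ i ∈ s', p i * Real.log (Real.exp (a i) / p i)
      = p i * a i + Real.negMulLog (p i) := by
    intro i hi
    have hpi := (Finset.mem_filter.1 hi).2
    rw [Real.log_div (Real.exp_ne_zero _) (ne_of_gt hpi), Real.log_exp, Real.negMulLog]
    ring
  rw [Finset.sum_congr rfl hxi] at jensen
  rw [hLHS, ← Finset.sum_congr rfl hterm]
  refine jensen.trans (Real.log_le_log ?_ ?_)
  · exact Finset.sum_pos (fun i _ => Real.exp_pos _) hne'
  · exact Finset.sum_le_sum_of_subset_of_nonneg (Finset.filter_subset _ _)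
      (fun i _ _ => (Real.exp_pos _).le)



variable {X : Type*}

/-- Indexed refinement cell. -/
def rf (f : X → X) {ι : Type*} (t : ι → Set X) (n : ℕ) (c : Fin n → ι) : Set X :=
  ⋂ k : Fin n, f^[(k : ℕ)] ⁻¹' t (c k)

lemma mem_rf {f : X → X} {ι : Type*} {t : ι → Set X} {n : ℕ} {c : Fin n → ι} {x : X} :
    x ∈ rf f t n c ↔ ∀ k : Fin n, f^[(k : ℕ)] x ∈ t (c k) := by
  simp [rf]

/-- An indexed finite measurable partition. -/
structure IsPart [MeasurableSpace X] {ι : Type*} (t : ι → Set X) : Prop where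
  meas : ∀ i, MeasurableSet (t i)
  disj : Pairwise (Function.onFun Disjoint t)
  cover : ∀ x, ∃ i, x ∈ t i

lemma IsPart.eq_of_mem [MeasurableSpace X] {ι : Type*} {t : ι → Set X} (ht : IsPart t)
    {i j : ι} {x : X} (hi : x ∈ t i) (hj : x ∈ t j) : i = j := by
  by_contra h
  exact Set.disjoint_left.1 (ht.disj h) hi hj

lemma IsPart.rf [MeasurableSpace X] {ι : Type*} {t : ι → Set X} (ht : IsPart t)
    {f : X → X} (hf : Measurable f) (n : ℕ) : IsPart (rf f t n) where
  meas c := MeasurableSet.iInter fun k => (hf.iterate (k : ℕ)) (ht.meas (c k))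
  disj := by
    intro c c' hcc
    have : ∃ k, c k ≠ c' k := by
      by_contra h
      push_neg at h
      exact hcc (funext h)
    obtain ⟨k, hk⟩ := this
    refine Set.disjoint_left.2 fun x hx hx' => ?_
    exact Set.disjoint_left.1 (ht.disj hk) (mem_rf.1 hx k) (mem_rf.1 hx' k)
  cover x := by
    choose g hg using fun k : Fin n => ht.cover (f^[(k : ℕ)] x)
    exact ⟨g, mem_rf.2 hg⟩

lemma IsPart.measure_biUnion [MeasurableSpace X] {ι : Type*} {t : ι → Set X} (ht : IsPart t)
    (μ : Measure X) (s : Finset ι) : μ (⋃ i ∈ s, t i) = ∑ i ∈ s, μ (t i) :=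
  measure_biUnion_finset (fun i _ j _ hij => ht.disj hij) (fun i _ => ht.meas i)

lemma IsPart.sum_measure [MeasurableSpace X] {ι : Type*} [Fintype ι] {t : ι → Set X}
    (ht : IsPart t) (μ : Measure X) : ∑ i : ι, μ (t i) = μ Set.univ := by
  rw [← ht.measure_biUnion μ Finset.univ]
  congr 1
  apply Set.eq_univ_of_forall
  intro x
  obtain ⟨i, hi⟩ := ht.cover x
  exact Set.mem_biUnion (Finset.mem_univ i) hi

/-- splice equivalence between `Fin n → Fin m → ι` and `Fin (n*m) → ι`. -/
lemma rf_comp {f : X → X} {ι : Type*} (t : ι → Set X) {m : ℕ} (hm : 0 < m) (n : ℕ)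
    (w : Fin n → Fin m → ι) :
    rf (f^[m]) (fun d : Fin m → ι => rf f t m d) n w
      = rf f t (n * m) (fun j =>
          w ⟨(j : ℕ) / m, Nat.div_lt_of_lt_mul (lt_of_lt_of_eq j.2 (Nat.mul_comm n m))⟩
            ⟨(j : ℕ) % m, Nat.mod_lt _ hm⟩) := by
  ext x
  simp only [mem_rf]
  constructor
  · intro h j
    have h2 := h ⟨(j : ℕ) / m, Nat.div_lt_of_lt_mul (lt_of_lt_of_eq j.2 (Nat.mul_comm n m))⟩
      ⟨(j : ℕ) % m, Nat.mod_lt _ hm⟩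
    simpa [← Function.iterate_mul, ← Function.iterate_add_apply,
      Nat.mod_add_div (j : ℕ) m] using h2
  · intro h k i
    have hj : (i : ℕ) + m * (k : ℕ) < n * m := by
      have hk : (k : ℕ) ≤ n - 1 := Nat.le_sub_one_of_lt k.2
      have : (i : ℕ) + m * (k : ℕ) < m + m * (n - 1) := by
        have := i.2
        have hmk : m * (k : ℕ) ≤ m * (n - 1) := Nat.mul_le_mul_left m hk
        omega
      calc (i : ℕ) + m * (k : ℕ) < m + m * (n - 1) := this
        _ = m * n := by
            have hn : 0 < n := k.pos
            have : n - 1 + 1 = n := Nat.succ_pred_eq_of_pos hn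
            calc m + m * (n - 1) = m * (n - 1 + 1) := by ring
              _ = m * n := by rw [this]
        _ = n * m := Nat.mul_comm m n
    have h3 := h ⟨(i : ℕ) + m * (k : ℕ), hj⟩
    have e1 : ((i : ℕ) + m * (k : ℕ)) / m = (k : ℕ) := by
      rw [Nat.add_mul_div_left _ _ hm, Nat.div_eq_of_lt i.2]
      omega
    have e2 : ((i : ℕ) + m * (k : ℕ)) % m = (i : ℕ) := by
      rw [Nat.add_mul_mod_self_left, Nat.mod_eq_of_lt i.2]
    simp only [e1, e2] at h3
    simpa [← Function.iterate_mul, ← Function.iterate_add_apply] using h3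

lemma sum_rf_comp {f : X → X} {ι : Type*} [Fintype ι] (t : ι → Set X) {m : ℕ} (hm : 0 < m)
    (n : ℕ) (F : Set X → ℝ) :
    ∑ c : Fin (n * m) → ι, F (rf f t (n * m) c)
      = ∑ w : Fin n → Fin m → ι, F (rf (f^[m]) (fun d : Fin m → ι => rf f t m d) n w) := by
  classical
  have hbij : Function.Bijective
      (fun (w : Fin n → Fin m → ι) (j : Fin (n * m)) =>
        w ⟨(j : ℕ) / m, Nat.div_lt_of_lt_mul (lt_of_lt_of_eq j.2 (Nat.mul_comm n m))⟩
          ⟨(j : ℕ) % m, Nat.mod_lt _ hm⟩) := by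
    rw [Function.bijective_iff_has_inverse]
    refine ⟨fun c k i => c ⟨(i : ℕ) + m * (k : ℕ), ?_⟩, ?_, ?_⟩
    · have hk := k.2
      have hi := i.2
      calc (i : ℕ) + m * (k : ℕ) < m + m * (k : ℕ) := by omega
        _ = m * ((k : ℕ) + 1) := by ring
        _ ≤ m * n := Nat.mul_le_mul_left m hk
        _ = n * m := Nat.mul_comm m n
    · intro w
      funext k i
      have e1 : ((i : ℕ) + m * (k : ℕ)) / m = (k : ℕ) := by
        rw [Nat.add_mul_div_left _ _ hm, Nat.div_eq_of_lt i.2]; omega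
      have e2 : ((i : ℕ) + m * (k : ℕ)) % m = (i : ℕ) := by
        rw [Nat.add_mul_mod_self_left, Nat.mod_eq_of_lt i.2]
      show w _ _ = w k i
      congr 1
      · exact Fin.ext e1
      · exact Fin.ext e2
    · intro c
      funext j
      show c _ = c j
      congr 1
      apply Fin.ext
      simp [Nat.mod_add_div]
  rw [← Function.Bijective.sum_comp hbij (fun c => F (rf f t (n * m) c))]
  apply Finset.sum_congr rfl
  intro w _
  rw [rf_comp t hm n w]


lemma sum_image_of_collisions {α β : Type*} [DecidableEq β] (s : Finset α) (F : α → β)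
    (g : β → ℝ) (h : ∀ a ∈ s, ∀ b ∈ s, a ≠ b → F a = F b → g (F a) = 0) :
    ∑ b ∈ s.image F, g b = ∑ a ∈ s, g (F a) := by
  classical
  rw [Finset.sum_comp g F]
  apply Finset.sum_congr rfl
  intro b hb
  obtain ⟨a0, ha0, rfl⟩ := Finset.mem_image.1 hb
  rcases Nat.lt_or_ge (s.filter (fun a => F a = F a0)).card 2 with hc | hc
  · have h1 : 0 < (s.filter (fun a => F a = F a0)).card :=
      Finset.card_pos.2 ⟨a0, Finset.mem_filter.2 ⟨ha0, rfl⟩⟩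
    have : (s.filter (fun a => F a = F a0)).card = 1 := by omega
    rw [this, one_smul]
  · obtain ⟨a, ha, b, hbb, hab⟩ := Finset.one_lt_card.1 hc
    have haf := Finset.mem_filter.1 ha
    have hbf := Finset.mem_filter.1 hbb
    have hg : g (F a0) = 0 := by
      have := h a haf.1 b hbf.1 hab (haf.2.trans hbf.2.symm)
      rwa [haf.2] at this
    rw [hg, smul_zero]

lemma partitionEntropy_eq_tuple_sum {X : Type*} [MeasurableSpace X] (μ : Measure X)
    (f : X → X) (P : Finset (Set X)) (hP : IsMeasPartition P) (n : ℕ) :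
    partitionEntropy μ (dynRefine f P n)
      = ∑ c : Fin n → {A // A ∈ P},
          Real.negMulLog (μ (rf f (fun i : {A // A ∈ P} => (i : Set X)) n c)).toReal := by
  classical
  have hdef : dynRefine f P n = Finset.image
      (fun c : Fin n → {A // A ∈ P} => rf f (fun i : {A // A ∈ P} => (i : Set X)) n c)
      Finset.univ := by
    unfold dynRefine rf
    congr
  rw [partitionEntropy, hdef]
  rw [sum_image_of_collisions]
  intro a _ b _ hab hFab
  have hempty : rf f (fun i : {A // A ∈ P} => (i : Set X)) n a = ∅ := by
    by_contra hne
    obtain ⟨x, hx⟩ := Set.nonempty_iff_ne_empty.2 hne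
    obtain ⟨k, hk⟩ : ∃ k, a k ≠ b k := by
      by_contra hcon
      push_neg at hcon
      exact hab (funext hcon)
    have h1 : f^[(k : ℕ)] x ∈ (a k : Set X) := by
      have := Set.mem_iInter.1 hx k; exact this
    have h2 : f^[(k : ℕ)] x ∈ (b k : Set X) := by
      have hx2 : x ∈ rf f (fun i : {A // A ∈ P} => (i : Set X)) n b := hFab ▸ hx
      have := Set.mem_iInter.1 hx2 k; exact this
    have hne2 : ((a k : Set X)) ≠ ((b k : Set X)) := fun hset => hk (Subtype.ext hset)
    exact Set.disjoint_left.1 (hP.2.1 (a k).2 (b k).2 hne2) h1 h2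
  rw [hempty]
  simp


section Span

variable {X : Type*}

lemma exists_spanning [MetricSpace X] [CompactSpace X] (f : X → X) (hf : Continuous f)
    (n : ℕ) {ε : ℝ} (hε : 0 < ε) : ∃ E : Finset X, IsSpanning f n ε E := by
  classical
  set U : X → Set X := fun x => ⋂ k : Fin n, (f^[(k : ℕ)]) ⁻¹' Metric.ball (f^[(k : ℕ)] x) ε
    with hU
  have hUopen : ∀ x, IsOpen (U x) :=
    fun x => isOpen_iInter_of_finite fun k =>
      ((hf.iterate (k : ℕ)).isOpen_preimage _ Metric.isOpen_ball)
  have hcover : Set.univ ⊆ ⋃ x : X, U x := by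
    intro x _
    refine Set.mem_iUnion.2 ⟨x, Set.mem_iInter.2 fun k => ?_⟩
    simp [hε]
  obtain ⟨E, hE⟩ := isCompact_univ.elim_finite_subcover U hUopen hcover
  refine ⟨E, fun x => ?_⟩
  obtain ⟨y, hy, hxy⟩ := Set.mem_iUnion₂.1 (hE (Set.mem_univ x))
  refine ⟨y, hy, fun k hk => ?_⟩
  have := Set.mem_iInter.1 hxy ⟨k, hk⟩
  simpa [dist_comm] using this

lemma le_log_spanningSum [MetricSpace X] [CompactSpace X] (f : X → X) (hf : Continuous f)
    (φ : X → ℝ) (n : ℕ) {ε : ℝ} (hε : 0 < ε) {B : ℝ}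
    (h : ∀ E : Finset X, IsSpanning f n ε E →
      Real.exp B ≤ ∑ y ∈ E, Real.exp (∑ k ∈ Finset.range n, φ (f^[k] y))) :
    B ≤ Real.log (spanningSum f φ n ε) := by
  set S := {s : ℝ | ∃ E : Finset X, IsSpanning f n ε E ∧
    s = ∑ y ∈ E, Real.exp (∑ k ∈ Finset.range n, φ (f^[k] y))} with hS
  obtain ⟨E0, hE0⟩ := exists_spanning f hf n hε
  have hne : S.Nonempty := ⟨_, E0, hE0, rfl⟩
  have hlb : ∀ s ∈ S, Real.exp B ≤ s := by
    rintro s ⟨E, hEsp, rfl⟩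
    exact h E hEsp
  have hInf : Real.exp B ≤ sInf S := le_csInf hne hlb
  have hpos : 0 < sInf S := lt_of_lt_of_le (Real.exp_pos B) hInf
  rw [spanningSum, ← hS]
  calc B = Real.log (Real.exp B) := (Real.log_exp B).symm
    _ ≤ Real.log (sInf S) := Real.log_le_log (Real.exp_pos B) hInf

lemma integral_birkhoff [MetricSpace X] [CompactSpace X] [MeasurableSpace X] [BorelSpace X]
    (f : X → X) (hf : Continuous f) (μ : Measure X) [IsProbabilityMeasure μ]
    (hμ : MeasurePreserving f μ μ) (φ : X → ℝ) (hφ : Continuous φ) (N : ℕ) :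
    ∫ x, (∑ k ∈ Finset.range N, φ (f^[k] x)) ∂μ = (N : ℝ) * ∫ x, φ x ∂μ := by
  have hint : ∀ k : ℕ, Integrable (fun x => φ (f^[k] x)) μ :=
    fun k => ((hφ.comp (hf.iterate k)).integrable_of_hasCompactSupport
      (HasCompactSupport.of_compactSpace _))
  rw [integral_finset_sum _ (fun k _ => hint k)]
  have hterm : ∀ k : ℕ, ∫ x, φ (f^[k] x) ∂μ = ∫ x, φ x ∂μ := by
    intro k
    have hmap : Measure.map (f^[k]) μ = μ := (hμ.iterate k).map_eq
    calc ∫ x, φ (f^[k] x) ∂μ = ∫ y, φ y ∂(Measure.map (f^[k]) μ) :=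
          (integral_map (hf.measurable.iterate k).aemeasurable
            hφ.aestronglyMeasurable).symm
      _ = ∫ x, φ x ∂μ := by rw [hmap]
  rw [Finset.sum_congr rfl fun k _ => hterm k, Finset.sum_const, Finset.card_range,
    nsmul_eq_mul]

end Span

section Core

variable {X : Type*} [MetricSpace X] [CompactSpace X] [MeasurableSpace X] [BorelSpace X]

set_option maxHeartbeats 1000000 in
lemma core [Nonempty X] (f : X → X) (hf : Continuous f) (μ : Measure X)
    [IsProbabilityMeasure μ] (hμ : MeasurePreserving f μ μ) (φ : X → ℝ) (hφ : Continuous φ)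
    {ι : Type*} [Fintype ι] [Nonempty ι] (t : ι → Set X) (ht : IsPart t)
    (m : ℕ) (hm : 0 < m) :
    ∃ ε : ℝ, 0 < ε ∧ ∀ n : ℕ, 0 < n →
      (∑ c : Fin (n * m) → ι, Real.negMulLog (μ (rf f t (n * m) c)).toReal)
          + (n * m : ℝ) * ∫ x, φ x ∂μ
        ≤ Real.log (spanningSum f φ (n * m) ε) + n * (Real.log 2 + 2) + 1 := by
  classical
  have hfm : Measurable f := hf.measurable
  set u : (Fin m → ι) → Set X := fun d => rf f t m d with hu_def
  have hu : IsPart u := ht.rf hfm m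
  set K : ℝ := (Fintype.card (Fin m → ι) : ℝ) with hKdef
  have hK1 : (1 : ℝ) ≤ K := by
    rw [hKdef]
    exact_mod_cast Fintype.card_pos
  have hlogK : 0 ≤ Real.log K := Real.log_nonneg hK1
  set η : ℝ := (1 + Real.log K)⁻¹ with hη_def
  have hηpos : 0 < η := by
    rw [hη_def]
    exact inv_pos.2 (by linarith)
  have hηlog : η * Real.log K ≤ 1 := by
    rw [hη_def, inv_mul_le_iff₀ (by linarith)]
    linarith
  have hκex : ∀ d : Fin m → ι, ∃ κ : Set X, κ ⊆ u d ∧ IsClosed κ ∧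
      μ (u d \ κ) < ENNReal.ofReal (η / K) := by
    intro d
    obtain ⟨F, hFsub, hFcl, hFlt⟩ := (hu.meas d).exists_isClosed_diff_lt
      (measure_ne_top μ _) (ε := ENNReal.ofReal (η / K)) (by
        simp only [ne_eq, ENNReal.ofReal_eq_zero, not_le]
        exact div_pos hηpos (lt_of_lt_of_le one_pos hK1))
    exact ⟨F, hFsub, hFcl, hFlt⟩
  choose κ hκsub hκcl hκlt using hκex
  have hsep : ∀ p : (Fin m → ι) × (Fin m → ι), ∃ δ : ℝ, 0 < δ ∧ (p.1 ≠ p.2 →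
      Disjoint (Metric.thickening δ (κ p.1)) (Metric.thickening δ (κ p.2))) := by
    intro p
    by_cases hp : p.1 = p.2
    · exact ⟨1, one_pos, fun h => absurd hp h⟩
    · have hdisj : Disjoint (κ p.1) (κ p.2) :=
        Set.disjoint_of_subset (hκsub p.1) (hκsub p.2) (hu.disj hp)
      obtain ⟨δ, hδpos, hδ⟩ := hdisj.exists_thickenings ((hκcl p.1).isCompact) (hκcl p.2)
      exact ⟨δ, hδpos, fun _ => hδ⟩
  choose δfun hδpos hδdisj using hsep
  set ε0 : ℝ := Finset.univ.inf' Finset.univ_nonempty δfun with hε0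
  have hε0pos : 0 < ε0 := by
    rw [hε0, Finset.lt_inf'_iff]
    exact fun p _ => hδpos p
  have hε0le : ∀ p, ε0 ≤ δfun p := fun p => Finset.inf'_le _ (Finset.mem_univ p)
  obtain ⟨ε1, hε1pos, hφmod⟩ := Metric.uniformContinuous_iff.1
    (CompactSpace.uniformContinuous_of_continuous hφ) ((m : ℝ)⁻¹) (by positivity)
  refine ⟨min ε0 ε1, lt_min hε0pos hε1pos, ?_⟩
  intro n hn
  set N := n * m with hN
  set g : X → X := f^[m] with hg_def
  have hgm : Measurable g := hfm.iterate m
  have hgpres : MeasurePreserving g μ μ := hμ.iterate m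
  set v : Option (Fin m → ι) → Set X := fun o => o.elim (⋃ d, κ d)ᶜ κ with hv_def
  have hv : IsPart v := by
    refine ⟨?_, ?_, ?_⟩
    · rintro (_ | d)
      · exact (MeasurableSet.iUnion fun d => (hκcl d).measurableSet).compl
      · exact (hκcl d).measurableSet
    · rintro (_ | d) (_ | d') hne
      · exact absurd rfl hne
      · exact Set.disjoint_left.2 fun x hx hx' => hx (Set.mem_iUnion.2 ⟨d', hx'⟩)
      · exact Set.disjoint_left.2 fun x hx hx' => hx' (Set.mem_iUnion.2 ⟨d, hx⟩)
      · have hdd : d ≠ d' := fun h => hne (by rw [h])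
        exact Set.disjoint_of_subset (hκsub d) (hκsub d') (hu.disj hdd)
    · intro x
      by_cases hx : x ∈ ⋃ d, κ d
      · obtain ⟨d, hd⟩ := Set.mem_iUnion.1 hx
        exact ⟨some d, hd⟩
      · exact ⟨none, hx⟩
  have hvrf : IsPart (rf g v n) := hv.rf hgm n
  have hurf : IsPart (rf g u n) := hu.rf hgm n
  set V : (Fin n → Option (Fin m → ι)) → Set X := fun σ => rf g v n σ with hV
  set U : (Fin n → Fin m → ι) → Set X := fun w => rf g u n w with hU
  have hVmeas : ∀ σ, MeasurableSet (V σ) := fun σ => hvrf.meas σ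
  have hUmeas : ∀ w, MeasurableSet (U w) := fun w => hurf.meas w
  -- (b) splitting U cells by V cells
  have hUsplit : ∀ w, μ (U w) = ∑ σ : Fin n → Option (Fin m → ι), μ (U w ∩ V σ) := by
    intro w
    have hset : U w = ⋃ σ : Fin n → Option (Fin m → ι), U w ∩ V σ := by
      ext x
      constructor
      · intro hx
        obtain ⟨σ, hσ⟩ := hvrf.cover x
        exact Set.mem_iUnion.2 ⟨σ, hx, hσ⟩
      · intro hx
        obtain ⟨σ, hx1, _⟩ := Set.mem_iUnion.1 hx
        exact hx1
    calc μ (U w) = μ (⋃ σ : Fin n → Option (Fin m → ι), U w ∩ V σ) := by rw [← hset]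
      _ = ∑' σ : Fin n → Option (Fin m → ι), μ (U w ∩ V σ) :=
          measure_iUnion (fun σ σ' hne => Set.disjoint_of_subset Set.inter_subset_right
            Set.inter_subset_right (hvrf.disj hne)) (fun σ => (hUmeas w).inter (hVmeas σ))
      _ = ∑ σ : Fin n → Option (Fin m → ι), μ (U w ∩ V σ) := tsum_fintype _
  -- (c) splitting V cells by U cells
  have hVsplit : ∀ σ, μ (V σ) = ∑ w : Fin n → Fin m → ι, μ (U w ∩ V σ) := by
    intro σ
    have hset : V σ = ⋃ w : Fin n → Fin m → ι, U w ∩ V σ := by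
      ext x
      constructor
      · intro hx
        obtain ⟨w, hw⟩ := hurf.cover x
        exact Set.mem_iUnion.2 ⟨w, hw, hx⟩
      · intro hx
        obtain ⟨w, _, hx2⟩ := Set.mem_iUnion.1 hx
        exact hx2
    calc μ (V σ) = μ (⋃ w : Fin n → Fin m → ι, U w ∩ V σ) := by rw [← hset]
      _ = ∑' w : Fin n → Fin m → ι, μ (U w ∩ V σ) :=
          measure_iUnion (fun w w' hne => Set.disjoint_of_subset Set.inter_subset_left
            Set.inter_subset_left (hurf.disj hne)) (fun w => (hUmeas w).inter (hVmeas σ))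
      _ = ∑ w : Fin n → Fin m → ι, μ (U w ∩ V σ) := tsum_fintype _
  -- (d) slices
  have hslice : ∀ k : Fin n,
      ∑ σ ∈ Finset.univ.filter (fun σ : Fin n → Option (Fin m → ι) => σ k = none), μ (V σ)
        = μ (v none) := by
    intro k
    choose ix hix using hv.cover
    have hset : (⋃ σ ∈ Finset.univ.filter
          (fun σ : Fin n → Option (Fin m → ι) => σ k = none), V σ)
        = g^[(k : ℕ)] ⁻¹' (v none) := by
      ext x
      constructor
      · intro hx
        obtain ⟨σ, hσmem, hxσ⟩ := Set.mem_iUnion₂.1 hx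
        have h1 : g^[(k : ℕ)] x ∈ v (σ k) := mem_rf.1 hxσ k
        have h2 : σ k = none := (Finset.mem_filter.1 hσmem).2
        rwa [h2] at h1
      · intro hx
        refine Set.mem_iUnion₂.2
          ⟨fun k' => if k' = k then none else ix (g^[(k' : ℕ)] x), ?_, ?_⟩
        · simp
        · rw [mem_rf]
          intro k'
          by_cases hk' : k' = k
          · subst hk'
            simpa using hx
          · simpa [hk'] using hix (g^[(k' : ℕ)] x)
    rw [← hvrf.measure_biUnion μ, hset,
      (hgpres.iterate (k : ℕ)).measure_preimage (hv.meas none).nullMeasurableSet]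
  -- (e) small remainder
  have hvnone : (μ (v none)).toReal ≤ η := by
    have hsub : v none ⊆ ⋃ d, (u d \ κ d) := by
      intro x hx
      obtain ⟨d, hd⟩ := hu.cover x
      exact Set.mem_iUnion.2 ⟨d, hd, fun hc => hx (Set.mem_iUnion.2 ⟨d, hc⟩)⟩
    have h1 : μ (v none) ≤ ∑ d, μ (u d \ κ d) :=
      (measure_mono hsub).trans (measure_iUnion_fintype_le μ _)
    have h2 : (∑ d, μ (u d \ κ d)) ≤ ∑ _d : Fin m → ι, ENNReal.ofReal (η / K) :=
      Finset.sum_le_sum fun d _ => (hκlt d).le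
    have h3 : (∑ _d : Fin m → ι, ENNReal.ofReal (η / K)) = ENNReal.ofReal η := by
      rw [Finset.sum_const, Finset.card_univ, nsmul_eq_mul]
      rw [← ENNReal.ofReal_natCast, ← ENNReal.ofReal_mul (by positivity)]
      congr 1
      rw [← hKdef]
      field_simp
    have h4 : μ (v none) ≤ ENNReal.ofReal η := h1.trans (h2.trans_eq h3)
    calc (μ (v none)).toReal ≤ (ENNReal.ofReal η).toReal :=
          ENNReal.toReal_mono ENNReal.ofReal_ne_top h4
      _ = η := ENNReal.toReal_ofReal hηpos.le
  -- counting of none-coordinates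
  set z : (Fin n → Option (Fin m → ι)) → ℕ :=
    fun σ => (Finset.univ.filter (fun k => σ k = none)).card with hz
  -- Step 1 : reindexing
  have hstep1 : (∑ c : Fin N → ι, Real.negMulLog (μ (rf f t N c)).toReal)
      = ∑ w : Fin n → Fin m → ι, Real.negMulLog (μ (U w)).toReal :=
    sum_rf_comp t hm n (fun S => Real.negMulLog (μ S).toReal)
  -- Step 2 : refine by V
  have hstep2 : (∑ w : Fin n → Fin m → ι, Real.negMulLog (μ (U w)).toReal)
      ≤ ∑ w : Fin n → Fin m → ι, ∑ σ : Fin n → Option (Fin m → ι),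
          Real.negMulLog (μ (U w ∩ V σ)).toReal := by
    refine Finset.sum_le_sum fun w _ => ?_
    have h1 : (μ (U w)).toReal = ∑ σ : Fin n → Option (Fin m → ι), (μ (U w ∩ V σ)).toReal := by
      rw [hUsplit w, ENNReal.toReal_sum (fun _ _ => measure_ne_top μ _)]
    rw [h1]
    exact negMulLog_sum_le _ _ (fun σ _ => ENNReal.toReal_nonneg)
  -- Step 3 : per-σ Jensen bound
  have hstep3 : ∀ σ : Fin n → Option (Fin m → ι),
      (∑ w : Fin n → Fin m → ι, Real.negMulLog (μ (U w ∩ V σ)).toReal)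
        ≤ Real.negMulLog (μ (V σ)).toReal
            + (μ (V σ)).toReal * ((z σ : ℝ) * Real.log K) := by
    intro σ
    set W := Finset.univ.filter (fun w : Fin n → Fin m → ι => (U w ∩ V σ).Nonempty) with hW
    have hempty : ∀ w : Fin n → Fin m → ι, w ∉ W → U w ∩ V σ = ∅ := by
      intro w hw
      rw [← Set.not_nonempty_iff_eq_empty]
      intro hcon
      exact hw (Finset.mem_filter.2 ⟨Finset.mem_univ _, hcon⟩)
    have hdrop : ∑ w : Fin n → Fin m → ι, Real.negMulLog (μ (U w ∩ V σ)).toReal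
        = ∑ w ∈ W, Real.negMulLog (μ (U w ∩ V σ)).toReal := by
      refine (Finset.sum_subset (Finset.filter_subset _ _) ?_).symm
      intro w _ hw
      rw [hempty w hw]
      simp
    have hWsum : ∑ w ∈ W, (μ (U w ∩ V σ)).toReal = (μ (V σ)).toReal := by
      have hall : (μ (V σ)).toReal
          = ∑ w : Fin n → Fin m → ι, (μ (U w ∩ V σ)).toReal := by
        rw [hVsplit σ, ENNReal.toReal_sum (fun _ _ => measure_ne_top μ _)]
      rw [hall]
      refine Finset.sum_subset (Finset.filter_subset _ _) ?_
      intro w _ hw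
      rw [hempty w hw]
      simp
    have hcard : (W.card : ℝ) ≤ K ^ (z σ) := by
      have hinj : Set.InjOn
          (fun w : Fin n → Fin m → ι => fun k : {k : Fin n // σ k = none} => w k.1) W := by
        intro w hw w' hw' heq
        funext k
        rcases ho : σ k with _ | d
        · exact congrFun heq ⟨k, ho⟩
        · obtain ⟨x, hxU, hxV⟩ := (Finset.mem_filter.1 hw).2
          have h1 : g^[(k : ℕ)] x ∈ u (w k) := mem_rf.1 hxU k
          have h2 : g^[(k : ℕ)] x ∈ v (σ k) := mem_rf.1 hxV k
          rw [ho] at h2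
          have hwk : w k = d := hu.eq_of_mem h1 (hκsub d h2)
          obtain ⟨x', hxU', hxV'⟩ := (Finset.mem_filter.1 hw').2
          have h1' : g^[(k : ℕ)] x' ∈ u (w' k) := mem_rf.1 hxU' k
          have h2' : g^[(k : ℕ)] x' ∈ v (σ k) := mem_rf.1 hxV' k
          rw [ho] at h2'
          have hwk' : w' k = d := hu.eq_of_mem h1' (hκsub d h2')
          rw [hwk, hwk']
      have hle := Finset.card_le_card_of_injOn _ (fun a _ => Finset.mem_univ _) hinj
      have hcardeq : (Finset.univ : Finset ({k : Fin n // σ k = none} → Fin m → ι)).card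
          = Fintype.card (Fin m → ι) ^ (z σ) := by
        rw [Finset.card_univ, Fintype.card_fun, Fintype.card_subtype]
      calc (W.card : ℝ)
          ≤ ((Finset.univ : Finset ({k : Fin n // σ k = none} → Fin m → ι)).card : ℝ) := by
            exact_mod_cast hle
        _ = K ^ (z σ) := by rw [hcardeq, hKdef]; push_cast; ring
    rcases W.eq_empty_or_nonempty with hWe | hWne
    · have hVzero : (μ (V σ)).toReal = 0 := by rw [← hWsum, hWe, Finset.sum_empty]
      rw [hdrop, hWe, hVzero]
      simp
    · have hjensen := sum_negMulLog_le_card W (fun w => (μ (U w ∩ V σ)).toReal)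
        (fun _ _ => ENNReal.toReal_nonneg)
      rw [hWsum] at hjensen
      rw [hdrop]
      refine hjensen.trans (add_le_add_right ?_ _)
      refine mul_le_mul_of_nonneg_left ?_ ENNReal.toReal_nonneg
      have hWpos : (0 : ℝ) < W.card := by exact_mod_cast Finset.card_pos.2 hWne
      calc Real.log W.card ≤ Real.log (K ^ (z σ)) := Real.log_le_log hWpos hcard
        _ = (z σ : ℝ) * Real.log K := by rw [Real.log_pow]
  -- Step 4 : total splitting cost
  have hstep4 : ∑ σ : Fin n → Option (Fin m → ι),
      (μ (V σ)).toReal * ((z σ : ℝ) * Real.log K) ≤ n := by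
    have hzind : ∀ σ : Fin n → Option (Fin m → ι),
        (z σ : ℝ) = ∑ k : Fin n, if σ k = none then (1 : ℝ) else 0 := by
      intro σ
      rw [hz]
      push_cast [Finset.card_filter]
      rfl
    have hswap : ∑ σ : Fin n → Option (Fin m → ι), (μ (V σ)).toReal * (z σ : ℝ)
        = ∑ k : Fin n, (μ (v none)).toReal := by
      have h1 : ∀ σ : Fin n → Option (Fin m → ι), (μ (V σ)).toReal * (z σ : ℝ)
          = ∑ k : Fin n, if σ k = none then (μ (V σ)).toReal else 0 := by
        intro σ
        rw [hzind σ, Finset.mul_sum]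
        refine Finset.sum_congr rfl fun k _ => ?_
        by_cases h : σ k = none <;> simp [h]
      rw [Finset.sum_congr rfl fun σ _ => h1 σ, Finset.sum_comm]
      refine Finset.sum_congr rfl fun k _ => ?_
      rw [← Finset.sum_filter]
      have := hslice k
      have htr : ((∑ σ ∈ Finset.univ.filter
            (fun σ : Fin n → Option (Fin m → ι) => σ k = none), μ (V σ))).toReal
          = (μ (v none)).toReal := by rw [this]
      rw [← htr, ENNReal.toReal_sum (fun _ _ => measure_ne_top μ _)]
    calc ∑ σ : Fin n → Option (Fin m → ι), (μ (V σ)).toReal * ((z σ : ℝ) * Real.log K)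
        = Real.log K * ∑ σ : Fin n → Option (Fin m → ι), (μ (V σ)).toReal * (z σ : ℝ) := by
          rw [Finset.mul_sum]
          exact Finset.sum_congr rfl fun σ _ => by ring
      _ = Real.log K * (n * (μ (v none)).toReal) := by
          rw [hswap, Finset.sum_const, Finset.card_univ, Fintype.card_fin, nsmul_eq_mul]
      _ ≤ Real.log K * (n * η) := by
          refine mul_le_mul_of_nonneg_left ?_ hlogK
          exact mul_le_mul_of_nonneg_left hvnone (by positivity)
      _ = n * (η * Real.log K) := by ring
      _ ≤ n * 1 := mul_le_mul_of_nonneg_left hηlog (by positivity)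
      _ = n := mul_one _
  -- (★) main entropy inequality
  have hmain1 : (∑ c : Fin N → ι, Real.negMulLog (μ (rf f t N c)).toReal)
      ≤ (∑ σ : Fin n → Option (Fin m → ι), Real.negMulLog (μ (V σ)).toReal) + n := by
    rw [hstep1]
    refine hstep2.trans ?_
    rw [Finset.sum_comm]
    calc ∑ σ : Fin n → Option (Fin m → ι), ∑ w : Fin n → Fin m → ι,
          Real.negMulLog (μ (U w ∩ V σ)).toReal
        ≤ ∑ σ : Fin n → Option (Fin m → ι),
            (Real.negMulLog (μ (V σ)).toReal
              + (μ (V σ)).toReal * ((z σ : ℝ) * Real.log K)) :=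
          Finset.sum_le_sum fun σ _ => hstep3 σ
      _ = (∑ σ : Fin n → Option (Fin m → ι), Real.negMulLog (μ (V σ)).toReal)
            + ∑ σ : Fin n → Option (Fin m → ι),
                (μ (V σ)).toReal * ((z σ : ℝ) * Real.log K) := Finset.sum_add_distrib
      _ ≤ _ := add_le_add_right hstep4 _
  -- Step 5 : spanning estimate
  set SN : X → ℝ := fun x => ∑ k ∈ Finset.range N, φ (f^[k] x) with hSN
  have hSNcont : Continuous SN := continuous_finset_sum _ (fun k _ => hφ.comp (hf.iterate k))
  have hSNint : Integrable SN μ :=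
    hSNcont.integrable_of_hasCompactSupport (HasCompactSupport.of_compactSpace _)
  set s0 := Finset.univ.filter (fun σ : Fin n → Option (Fin m → ι) => μ (V σ) ≠ 0) with hs0
  have hsum1 : ∑ σ ∈ s0, (μ (V σ)).toReal = 1 := by
    have hall : ∑ σ : Fin n → Option (Fin m → ι), (μ (V σ)).toReal = 1 := by
      rw [← ENNReal.toReal_sum (fun _ _ => measure_ne_top μ _), hvrf.sum_measure μ,
        measure_univ, ENNReal.toReal_one]
    rw [← hall]
    refine Finset.sum_subset (Finset.filter_subset _ _) ?_
    intro σ _ hσ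
    have : μ (V σ) = 0 := by
      by_contra hcon
      exact hσ (Finset.mem_filter.2 ⟨Finset.mem_univ _, hcon⟩)
    rw [this, ENNReal.toReal_zero]
  have hs0ne : s0.Nonempty := by
    by_contra h
    rw [Finset.not_nonempty_iff_eq_empty] at h
    rw [h, Finset.sum_empty] at hsum1
    norm_num at hsum1
  have hHv : (∑ σ : Fin n → Option (Fin m → ι), Real.negMulLog (μ (V σ)).toReal)
      = ∑ σ ∈ s0, Real.negMulLog (μ (V σ)).toReal := by
    refine (Finset.sum_subset (Finset.filter_subset _ _) ?_).symm
    intro σ _ hσ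
    have : μ (V σ) = 0 := by
      by_contra hcon
      exact hσ (Finset.mem_filter.2 ⟨Finset.mem_univ _, hcon⟩)
    rw [this, ENNReal.toReal_zero, Real.negMulLog_zero]
  have hIdec : ∫ x, SN x ∂μ = ∑ σ ∈ s0, ∫ x in V σ, SN x ∂μ := by
    have huniv : (⋃ σ : Fin n → Option (Fin m → ι), V σ) = Set.univ := by
      apply Set.eq_univ_of_forall
      intro x
      obtain ⟨σ, hσ⟩ := hvrf.cover x
      exact Set.mem_iUnion.2 ⟨σ, hσ⟩
    have h1 : ∫ x, SN x ∂μ = ∫ x in ⋃ σ : Fin n → Option (Fin m → ι), V σ, SN x ∂μ := by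
      rw [huniv, setIntegral_univ]
    rw [h1, integral_iUnion hVmeas (fun σ σ' hne => hvrf.disj hne) hSNint.integrableOn,
      tsum_fintype]
    refine (Finset.sum_subset (Finset.filter_subset _ _) ?_).symm
    intro σ _ hσ
    have h0 : μ (V σ) = 0 := by
      by_contra hcon
      exact hσ (Finset.mem_filter.2 ⟨Finset.mem_univ _, hcon⟩)
    rw [Measure.restrict_eq_zero.2 h0, integral_zero_measure]
  set T : ℝ := (Fintype.card (Fin n → Option (Fin m → ι)) : ℝ) + 1 with hT
  have hTpos : 0 < T := by positivity
  have hpts0 : ∀ σ ∈ s0, ∃ x, x ∈ V σ ∧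
      ∫ y in V σ, SN y ∂μ ≤ (μ (V σ)).toReal * SN x + 1 / T := by
    intro σ hσ
    have hμne := (Finset.mem_filter.1 hσ).2
    have hμpos : 0 < (μ (V σ)).toReal := ENNReal.toReal_pos hμne (measure_ne_top μ _)
    by_contra hcon
    push_neg at hcon
    have hbound : ∀ x ∈ V σ,
        SN x ≤ ((∫ y in V σ, SN y ∂μ) - 1 / T) / (μ (V σ)).toReal := by
      intro x hx
      have h := hcon x hx
      rw [le_div_iff₀ hμpos]
      nlinarith
    have hInt := setIntegral_mono_on hSNint.integrableOn
      (integrableOn_const (measure_ne_top μ _)) (hVmeas σ) hbound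
    rw [setIntegral_const, smul_eq_mul, measureReal_def] at hInt
    have heq : (μ (V σ)).toReal * (((∫ y in V σ, SN y ∂μ) - 1 / T) / (μ (V σ)).toReal)
        = (∫ y in V σ, SN y ∂μ) - 1 / T := by
      rw [mul_comm, div_mul_cancel₀ _ (ne_of_gt hμpos)]
    rw [heq] at hInt
    have h1T : (0 : ℝ) < 1 / T := by positivity
    linarith
  choose! xp hxpV hxpI using hpts0
  have hspanbound : ∀ E : Finset X, IsSpanning f N (min ε0 ε1) E →
      (∑ σ ∈ s0, Real.negMulLog (μ (V σ)).toReal) + ∫ x, SN x ∂μ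
        ≤ Real.log (∑ y ∈ E, Real.exp (SN y)) + (n * Real.log 2 + n + 1) := by
    intro E hE
    have hyp0 : ∀ σ ∈ s0, ∃ y, y ∈ E ∧
        ∀ k < N, dist (f^[k] (xp σ)) (f^[k] y) < min ε0 ε1 := by
      intro σ _
      obtain ⟨y, hy, hdist⟩ := hE (xp σ)
      exact ⟨y, hy, hdist⟩
    choose! yp hypE hypdist using hyp0
    have hEne : E.Nonempty := by
      obtain ⟨y, hy, _⟩ := hE (Classical.arbitrary X)
      exact ⟨y, hy⟩
    have hsumE_pos : 0 < ∑ y ∈ E, Real.exp (SN y) :=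
      Finset.sum_pos (fun _ _ => Real.exp_pos _) hEne
    have hSNcomp : ∀ σ ∈ s0, SN (xp σ) ≤ SN (yp σ) + n := by
      intro σ hσ
      have hterm : ∀ k ∈ Finset.range N,
          φ (f^[k] (xp σ)) ≤ φ (f^[k] (yp σ)) + (m : ℝ)⁻¹ := by
        intro k hk
        have hd := hypdist σ hσ k (Finset.mem_range.1 hk)
        have hmod := hφmod (lt_of_lt_of_le hd (min_le_right _ _))
        rw [Real.dist_eq] at hmod
        have := le_of_lt (lt_of_le_of_lt (le_abs_self _) hmod)
        linarith
      calc SN (xp σ) ≤ ∑ k ∈ Finset.range N, (φ (f^[k] (yp σ)) + (m : ℝ)⁻¹) :=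
            Finset.sum_le_sum hterm
        _ = SN (yp σ) + N * (m : ℝ)⁻¹ := by
            rw [Finset.sum_add_distrib, Finset.sum_const, Finset.card_range, nsmul_eq_mul]
        _ = SN (yp σ) + n := by
            have hNm : (N : ℝ) * (m : ℝ)⁻¹ = n := by
              rw [hN]
              push_cast
              field_simp
            rw [hNm]
    have hfiber : ∀ y0 : X, (((s0.filter (fun σ => yp σ = y0)).card : ℝ)) ≤ 2 ^ n := by
      intro y0
      set fib := s0.filter (fun σ => yp σ = y0) with hfib
      have hmemthick : ∀ τ ∈ fib, ∀ k : Fin n, ∀ d' : Fin m → ι, τ k = some d' →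
          g^[(k : ℕ)] y0 ∈ Metric.thickening ε0 (κ d') := by
        intro τ hτ k d' hτk
        have hτs0 : τ ∈ s0 := (Finset.mem_filter.1 hτ).1
        have hy0 : yp τ = y0 := (Finset.mem_filter.1 hτ).2
        have hxV := hxpV τ hτs0
        have h1 : g^[(k : ℕ)] (xp τ) ∈ v (τ k) := mem_rf.1 hxV k
        rw [hτk] at h1
        have hklt : m * (k : ℕ) < N := by
          rw [hN, Nat.mul_comm n m]
          exact (mul_lt_mul_iff_right₀ hm).2 k.2
        have hd := hypdist τ hτs0 (m * (k : ℕ)) hklt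
        rw [hy0] at hd
        rw [Function.iterate_mul] at hd
        refine Metric.mem_thickening_iff.2 ⟨g^[(k : ℕ)] (xp τ), h1, ?_⟩
        rw [dist_comm]
        exact lt_of_lt_of_le hd (min_le_left _ _)
      have hkey : ∀ k : Fin n, ∃ dk : Fin m → ι,
          ∀ σ ∈ fib, σ k = none ∨ σ k = some dk := by
        intro k
        by_cases hex : ∃ σ ∈ fib, ∃ d : Fin m → ι, σ k = some d
        · obtain ⟨σ0, hσ0, d0, hd0⟩ := hex
          refine ⟨d0, fun σ hσ => ?_⟩
          rcases ho : σ k with _ | d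
          · exact Or.inl rfl
          · right
            have hz1 := hmemthick σ hσ k d ho
            have hz2 := hmemthick σ0 hσ0 k d0 hd0
            have hdd0 : d = d0 := by
              by_contra hne
              have hdisj := hδdisj (d, d0) hne
              have hz1' : g^[(k : ℕ)] y0 ∈ Metric.thickening (δfun (d, d0)) (κ d) :=
                Metric.thickening_mono (hε0le (d, d0)) _ hz1
              have hz2' : g^[(k : ℕ)] y0 ∈ Metric.thickening (δfun (d, d0)) (κ d0) :=
                Metric.thickening_mono (hε0le (d, d0)) _ hz2
              exact Set.disjoint_left.1 hdisj hz1' hz2'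
            rw [hdd0]
        · refine ⟨Classical.arbitrary _, fun σ hσ => ?_⟩
          rcases ho : σ k with _ | d
          · exact Or.inl rfl
          · exact absurd ⟨σ, hσ, d, ho⟩ hex
      choose dk hdk using hkey
      have hinj : Set.InjOn
          (fun σ : Fin n → Option (Fin m → ι) => fun k : Fin n => decide (σ k = none)) fib := by
        intro σ hσ σ' hσ' heq
        funext k
        have h1 := hdk k σ hσ
        have h2 := hdk k σ' hσ'
        have heqk := congrFun heq k
        rcases h1 with h1 | h1 <;> rcases h2 with h2 | h2
        · rw [h1, h2]
        · simp [h1, h2] at heqk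
        · simp [h1, h2] at heqk
        · rw [h1, h2]
      have hcard := Finset.card_le_card_of_injOn _ (fun a _ => Finset.mem_univ _) hinj
      calc ((fib.card : ℝ))
          ≤ ((Finset.univ : Finset (Fin n → Bool)).card : ℝ) := by exact_mod_cast hcard
        _ = 2 ^ n := by
            rw [Finset.card_univ, Fintype.card_fun, Fintype.card_bool, Fintype.card_fin]
            push_cast
            ring
    have hcount : ∑ σ ∈ s0, Real.exp (SN (xp σ))
        ≤ Real.exp n * (2 ^ n * ∑ y ∈ E, Real.exp (SN y)) := by
      calc ∑ σ ∈ s0, Real.exp (SN (xp σ))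
          ≤ ∑ σ ∈ s0, Real.exp (SN (yp σ) + n) :=
            Finset.sum_le_sum fun σ hσ => Real.exp_le_exp.2 (by
              have := hSNcomp σ hσ
              linarith)
        _ = Real.exp n * ∑ σ ∈ s0, Real.exp (SN (yp σ)) := by
            rw [Finset.mul_sum]
            refine Finset.sum_congr rfl fun σ _ => ?_
            rw [Real.exp_add]
            ring
        _ ≤ Real.exp n * (2 ^ n * ∑ y ∈ E, Real.exp (SN y)) := by
            refine mul_le_mul_of_nonneg_left ?_ (Real.exp_pos _).le
            rw [Finset.sum_comp (fun y => Real.exp (SN y)) yp]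
            calc ∑ y0 ∈ s0.image yp, (s0.filter (fun σ => yp σ = y0)).card • Real.exp (SN y0)
                ≤ ∑ y0 ∈ s0.image yp, 2 ^ n * Real.exp (SN y0) := by
                  refine Finset.sum_le_sum fun y0 _ => ?_
                  rw [nsmul_eq_mul]
                  exact mul_le_mul_of_nonneg_right (hfiber y0) (Real.exp_pos _).le
              _ = 2 ^ n * ∑ y0 ∈ s0.image yp, Real.exp (SN y0) := by rw [Finset.mul_sum]
              _ ≤ 2 ^ n * ∑ y ∈ E, Real.exp (SN y) := by
                  refine mul_le_mul_of_nonneg_left ?_ (by positivity)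
                  refine Finset.sum_le_sum_of_subset_of_nonneg ?_
                    (fun _ _ _ => (Real.exp_pos _).le)
                  intro y0 hy0
                  obtain ⟨σ, hσ, rfl⟩ := Finset.mem_image.1 hy0
                  exact hypE σ hσ
    have hgibbs := gibbs s0 (fun σ => (μ (V σ)).toReal) (fun σ => SN (xp σ))
      (fun σ _ => ENNReal.toReal_nonneg) hsum1
    have hslacksum : ∑ _σ ∈ s0, (1 / T : ℝ) ≤ 1 := by
      rw [Finset.sum_const, nsmul_eq_mul]
      rw [div_eq_inv_mul, ← mul_assoc, mul_one]
      have hcardle : (s0.card : ℝ) ≤ T - 1 := by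
        rw [hT]
        simp only [add_sub_cancel_right]
        exact_mod_cast Finset.card_le_univ s0
      rw [inv_eq_one_div]
      rw [mul_comm]
      rw [div_mul_eq_mul_div, one_mul, div_le_one hTpos]
      linarith
    have hLHSsum_pos : 0 < ∑ σ ∈ s0, Real.exp (SN (xp σ)) :=
      Finset.sum_pos (fun _ _ => Real.exp_pos _) hs0ne
    calc (∑ σ ∈ s0, Real.negMulLog (μ (V σ)).toReal) + ∫ x, SN x ∂μ
        = ∑ σ ∈ s0, (Real.negMulLog (μ (V σ)).toReal + ∫ x in V σ, SN x ∂μ) := by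
          rw [hIdec, Finset.sum_add_distrib]
      _ ≤ ∑ σ ∈ s0, (Real.negMulLog (μ (V σ)).toReal
            + ((μ (V σ)).toReal * SN (xp σ) + 1 / T)) := by
          refine Finset.sum_le_sum fun σ hσ => ?_
          have := hxpI σ hσ
          linarith
      _ = (∑ σ ∈ s0, ((μ (V σ)).toReal * SN (xp σ) + Real.negMulLog (μ (V σ)).toReal))
            + ∑ _σ ∈ s0, (1 / T : ℝ) := by
          rw [← Finset.sum_add_distrib]
          refine Finset.sum_congr rfl fun σ _ => by ring
      _ ≤ Real.log (∑ σ ∈ s0, Real.exp (SN (xp σ))) + 1 := add_le_add hgibbs hslacksum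
      _ ≤ Real.log (Real.exp n * (2 ^ n * ∑ y ∈ E, Real.exp (SN y))) + 1 := by
          have := Real.log_le_log hLHSsum_pos hcount
          linarith
      _ = Real.log (∑ y ∈ E, Real.exp (SN y)) + (n * Real.log 2 + n + 1) := by
          rw [Real.log_mul (Real.exp_ne_zero _) (by positivity),
            Real.log_mul (by positivity) (ne_of_gt hsumE_pos), Real.log_exp, Real.log_pow]
          ring
  -- final assembly
  have hIbirk : ∫ x, SN x ∂μ = (N : ℝ) * ∫ x, φ x ∂μ := integral_birkhoff f hf μ hμ φ hφ N
  have hB := le_log_spanningSum f hf φ N (lt_min hε0pos hε1pos)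
    (B := (∑ c : Fin N → ι, Real.negMulLog (μ (rf f t N c)).toReal)
      + (N : ℝ) * ∫ x, φ x ∂μ - (n * (Real.log 2 + 2) + 1)) ?_
  · have hNc : ((N : ℝ)) = ((n : ℝ)) * m := by rw [hN]; push_cast; ring
    rw [hNc] at hB
    push_cast
    linarith
  · intro E hEsp
    have h5 := hspanbound E hEsp
    have hEne : E.Nonempty := by
      obtain ⟨y, hy, _⟩ := hEsp (Classical.arbitrary X)
      exact ⟨y, hy⟩
    have hsumE_pos : 0 < ∑ y ∈ E, Real.exp (SN y) :=
      Finset.sum_pos (fun _ _ => Real.exp_pos _) hEne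
    have hmain : (∑ c : Fin N → ι, Real.negMulLog (μ (rf f t N c)).toReal)
        + (N : ℝ) * ∫ x, φ x ∂μ
        ≤ Real.log (∑ y ∈ E, Real.exp (SN y)) + (n * (Real.log 2 + 2) + 1) := by
      rw [← hIbirk]
      rw [hHv] at hmain1
      have hexp : (n : ℝ) * (Real.log 2 + 2) + 1 = n * Real.log 2 + n + 1 + n := by ring
      rw [hexp]
      linarith [h5, hmain1]
    have hBle : (∑ c : Fin N → ι, Real.negMulLog (μ (rf f t N c)).toReal)
        + (N : ℝ) * ∫ x, φ x ∂μ - (n * (Real.log 2 + 2) + 1)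
        ≤ Real.log (∑ y ∈ E, Real.exp (SN y)) := by linarith
    calc Real.exp ((∑ c : Fin N → ι, Real.negMulLog (μ (rf f t N c)).toReal)
          + (N : ℝ) * ∫ x, φ x ∂μ - (n * (Real.log 2 + 2) + 1))
        ≤ Real.exp (Real.log (∑ y ∈ E, Real.exp (SN y))) := Real.exp_le_exp.2 hBle
      _ = ∑ y ∈ E, Real.exp (SN y) := Real.exp_log hsumE_pos



end Core

section Final

variable {X : Type*} [MetricSpace X] [CompactSpace X] [MeasurableSpace X] [BorelSpace X]

set_option maxHeartbeats 1000000 in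
lemma perPart [Nonempty X] (f : X → X) (hf : Continuous f) (μ : Measure X)
    [IsProbabilityMeasure μ] (hμ : MeasurePreserving f μ μ) (φ : X → ℝ) (hφ : Continuous φ)
    (P : Finset (Set X)) (hP : IsMeasPartition P) (m : ℕ) (hm : 0 < m) :
    ((dynEntropy f μ P : ℝ) : EReal) + ((∫ x, φ x ∂μ : ℝ) : EReal)
      ≤ topPressure f φ + (((Real.log 2 + 3) / m : ℝ) : EReal) := by
  classical
  set I : ℝ := ∫ x, φ x ∂μ with hI
  set c : ℝ := (Real.log 2 + 3) / m with hc
  set t : {A // A ∈ P} → Set X := fun i => (i : Set X) with ht_def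
  have hιne : Nonempty {A // A ∈ P} := by
    have hx : (Classical.arbitrary X) ∈ ⋃₀ (P : Set (Set X)) := by
      rw [hP.2.2]
      exact Set.mem_univ _
    obtain ⟨A, hA, _⟩ := Set.mem_sUnion.1 hx
    exact ⟨⟨A, hA⟩⟩
  have ht : IsPart t := by
    refine ⟨fun i => hP.1 i.1 i.2, ?_, ?_⟩
    · intro i j hij
      have hne : (i : Set X) ≠ (j : Set X) := fun h => hij (Subtype.ext h)
      exact hP.2.1 i.2 j.2 hne
    · intro x
      have hx : x ∈ ⋃₀ (P : Set (Set X)) := by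
        rw [hP.2.2]
        exact Set.mem_univ _
      obtain ⟨A, hA, hxA⟩ := Set.mem_sUnion.1 hx
      exact ⟨⟨A, hA⟩, hxA⟩
  obtain ⟨ε, hε, hcore⟩ := core f hf μ hμ φ hφ t ht m hm
  set W : ℕ → EReal := fun N => ((Real.log (spanningSum f φ N ε) / N : ℝ) : EReal) with hW
  have hΛ : Filter.atTop.limsup W ≤ topPressure f φ := by
    rw [topPressure]
    exact le_iSup₂ (f := fun (ε' : ℝ) (_ : 0 < ε') => Filter.atTop.limsup
      fun n : ℕ => ((Real.log (spanningSum f φ n ε') / n : ℝ) : EReal)) ε hε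
  set a : ℕ → ℝ := fun N => partitionEntropy μ (dynRefine f P N) / N with ha
  have hdyn : dynEntropy f μ P = Filter.atTop.liminf a := rfl
  have hbridge : ∀ N, partitionEntropy μ (dynRefine f P N)
      = ∑ q : Fin N → {A // A ∈ P}, Real.negMulLog (μ (rf f t N q)).toReal :=
    fun N => partitionEntropy_eq_tuple_sum μ f P hP N
  have hμle : ∀ S : Set X, (μ S).toReal ≤ 1 := by
    intro S
    calc (μ S).toReal ≤ (1 : ENNReal).toReal := ENNReal.toReal_mono ENNReal.one_ne_top prob_le_one
      _ = 1 := ENNReal.toReal_one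
  have hanneg : ∀ N, 0 ≤ a N := by
    intro N
    rw [ha]
    apply div_nonneg _ (Nat.cast_nonneg N)
    rw [hbridge N]
    exact Finset.sum_nonneg fun q _ =>
      Real.negMulLog_nonneg ENNReal.toReal_nonneg (hμle _)
  have hbdd : Filter.IsBoundedUnder (· ≥ ·) Filter.atTop a :=
    Filter.isBoundedUnder_of ⟨0, fun N => hanneg N⟩
  have hkey : ∀ b : ℝ, b < Filter.atTop.liminf a + I - c →
      (b : EReal) ≤ Filter.atTop.limsup W := by
    intro b hb
    have hb' : b - I + c < Filter.atTop.liminf a := by linarith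
    have hev1 : ∀ᶠ N in Filter.atTop, b - I + c < a N :=
      Filter.eventually_lt_of_lt_liminf hb' hbdd
    have hgt : Filter.Tendsto (fun n : ℕ => n * m) Filter.atTop Filter.atTop :=
      Filter.tendsto_atTop_atTop.2
        (fun b0 => ⟨b0, fun n hn => le_trans hn (Nat.le_mul_of_pos_right n hm)⟩)
    have hev2 : ∀ᶠ n in Filter.atTop, b - I + c < a (n * m) := hgt.eventually hev1
    have hev3 : ∀ᶠ n in Filter.atTop, (b : EReal) ≤ W (n * m) := by
      filter_upwards [hev2, Filter.eventually_ge_atTop 1] with n hn hn1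
      have hn0 : 0 < n := hn1
      have hcoren := hcore n hn0
      set NN : ℝ := (n : ℝ) * m with hNN
      have hNNpos : 0 < NN :=
        mul_pos (by exact_mod_cast hn0) (by exact_mod_cast hm)
      have hTu : a (n * m) = (∑ q : Fin (n * m) → {A // A ∈ P},
          Real.negMulLog (μ (rf f t (n * m) q)).toReal) / NN := by
        rw [ha]
        simp only []
        rw [hbridge (n * m)]
        congr 1
        rw [hNN]
        push_cast
        ring
      have hdivle : a (n * m) + I
          ≤ (Real.log (spanningSum f φ (n * m) ε) + n * (Real.log 2 + 2) + 1) / NN := by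
        rw [hTu, div_add' _ _ _ (ne_of_gt hNNpos)]
        exact (div_le_div_iff_of_pos_right hNNpos).2 (by linarith [hcoren])
      have hm0 : (m : ℝ) ≠ 0 := by exact_mod_cast hm.ne'
      have hn0' : (n : ℝ) ≠ 0 := by exact_mod_cast hn0.ne'
      have hsplit : (Real.log (spanningSum f φ (n * m) ε) + n * (Real.log 2 + 2) + 1) / NN
          = Real.log (spanningSum f φ (n * m) ε) / NN + ((Real.log 2 + 2) / m + 1 / NN) := by
        rw [hNN]
        field_simp
        ring
      have h1NN : 1 / NN ≤ 1 / (m : ℝ) := by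
        apply one_div_le_one_div_of_le
        · exact_mod_cast hm
        · rw [hNN]
          nlinarith [hn0', (by exact_mod_cast hn1 : (1:ℝ) ≤ (n:ℝ)), (by exact_mod_cast hm : (0:ℝ) < (m:ℝ))]
      have hcsplit : c = (Real.log 2 + 2) / m + 1 / m := by
        rw [hc]
        field_simp
        ring
      have hfin : b ≤ Real.log (spanningSum f φ (n * m) ε) / NN := by
        have h1 := hdivle
        rw [hsplit] at h1
        linarith [hn]
      have hWeq : W (n * m) = ((Real.log (spanningSum f φ (n * m) ε) / NN : ℝ) : EReal) := by
        rw [hW]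
        congr 2
        rw [hNN]
        push_cast
        ring
      rw [hWeq]
      exact EReal.coe_le_coe_iff.2 hfin
    calc (b : EReal) ≤ Filter.atTop.liminf (fun n => W (n * m)) :=
          Filter.le_liminf_of_le (by isBoundedDefault) hev3
      _ ≤ Filter.atTop.limsup (fun n => W (n * m)) := by
          exact Filter.liminf_le_limsup
      _ = Filter.limsup W (Filter.map (fun n : ℕ => n * m) Filter.atTop) := rfl
      _ ≤ Filter.atTop.limsup W := Filter.limsup_le_limsup_of_le hgt
  have hLIc : ((Filter.atTop.liminf a + I - c : ℝ) : EReal) ≤ Filter.atTop.limsup W := by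
    by_contra hcon
    push_neg at hcon
    obtain ⟨b, hb1, hb2⟩ := EReal.exists_between_coe_real hcon
    exact absurd (hkey b (by exact_mod_cast hb2)) (not_le.2 hb1)
  rw [hdyn]
  calc ((Filter.atTop.liminf a : ℝ) : EReal) + ((I : ℝ) : EReal)
      = ((Filter.atTop.liminf a + I - c : ℝ) : EReal) + ((c : ℝ) : EReal) := by
        rw [← EReal.coe_add, ← EReal.coe_add, sub_add_cancel]
    _ ≤ Filter.atTop.limsup W + ((c : ℝ) : EReal) := add_le_add_left hLIc _
    _ ≤ topPressure f φ + ((c : ℝ) : EReal) := add_le_add_left hΛ _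

end Final

end VPaux

set_option maxHeartbeats 1000000 in
/-- Variational inequality: for a continuous map `f` of a compact metric space, an
`f`-invariant Borel probability measure `μ` and a continuous potential `φ`, the
measure-theoretic pressure `h_μ(f) + ∫ φ dμ` is at most the topological pressure. -/
theorem measure_pressure_le_topPressure
    {X : Type*} [MetricSpace X] [CompactSpace X] [MeasurableSpace X] [BorelSpace X]
    (f : X → X) (hf : Continuous f)
    (μ : Measure X) [IsProbabilityMeasure μ] (hμ : MeasurePreserving f μ μ)
    (φ : X → ℝ) (hφ : Continuous φ) :
    ksEntropy f μ + ((∫ x, φ x ∂μ : ℝ) : EReal) ≤ topPressure f φ := by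
  classical
  have hX : Nonempty X := by
    by_contra h
    rw [not_nonempty_iff] at h
    have h0 : μ Set.univ = 0 := by
      rw [Set.univ_eq_empty_iff.2 h]
      exact measure_empty
    rw [measure_univ] at h0
    norm_num at h0
  have hP0 : IsMeasPartition ({Set.univ} : Finset (Set X)) := by
    refine ⟨?_, ?_, ?_⟩
    · intro A hA
      rw [Finset.mem_singleton] at hA
      subst hA
      exact MeasurableSet.univ
    · intro A hA B hB hAB
      rw [Finset.coe_singleton, Set.mem_singleton_iff] at hA hB
      exact absurd (hA.trans hB.symm) hAB
    · simp
  set I : ℝ := ∫ x, φ x ∂μ with hI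
  by_cases hTop : topPressure f φ = ⊤
  · rw [hTop]
    exact le_top
  by_cases hBot : topPressure f φ = ⊥
  · exfalso
    have h1 := VPaux.perPart f hf μ hμ φ hφ _ hP0 1 one_pos
    rw [hBot, EReal.bot_add, ← EReal.coe_add] at h1
    exact (EReal.coe_ne_bot _) (le_bot_iff.1 h1)
  set r : ℝ := (topPressure f φ).toReal with hr
  have hTp : ((r : ℝ) : EReal) = topPressure f φ := EReal.coe_toReal hTop hBot
  have hper : ∀ (P : Finset (Set X)), IsMeasPartition P → dynEntropy f μ P ≤ r - I := by
    intro P hP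
    have hlim : Filter.Tendsto (fun mq : ℕ => r + (Real.log 2 + 3) / mq)
        Filter.atTop (nhds r) := by
      have h0 := tendsto_const_div_atTop_nhds_zero_nat (Real.log 2 + 3)
      have h2 := Filter.Tendsto.const_add r h0
      simpa using h2
    have hev : ∀ᶠ mq : ℕ in Filter.atTop,
        dynEntropy f μ P + I ≤ r + (Real.log 2 + 3) / mq := by
      filter_upwards [Filter.eventually_ge_atTop 1] with mq hmq
      have h1 := VPaux.perPart f hf μ hμ φ hφ P hP mq hmq
      rw [← hTp, ← EReal.coe_add, ← EReal.coe_add] at h1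
      have h2 := EReal.coe_le_coe_iff.1 h1
      linarith
    have h3 := ge_of_tendsto hlim hev
    linarith
  have hsup : ksEntropy f μ ≤ ((r - I : ℝ) : EReal) :=
    iSup₂_le fun P hP => EReal.coe_le_coe_iff.2 (hper P hP)
  calc ksEntropy f μ + ((I : ℝ) : EReal)
      ≤ ((r - I : ℝ) : EReal) + ((I : ℝ) : EReal) := add_le_add_left hsup _
    _ = ((r : ℝ) : EReal) := by rw [← EReal.coe_add, sub_add_cancel]
    _ = topPressure f φ := hTp
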